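/- Let Σ be a real symmetric positive definite m×m matrix, let i be a fixed index, and let Γ be the matrix obtained from Σ by setting entry Γ_{jk} = 0 whenever j ≠ k and (j = i or k = i), and Γ_{jk} = Σ_{jk} otherwise. If 0 < ℓ ≤ L satisfy ℓ‖v‖² ≤ v^T Σ v ≤ L‖v‖² for all v ∈ ℝ^m, then for every v ∈ ℝ^m, |v^T Γ v − v^T Σ v| ≤ (2L/ℓ − 1) · v^T Σ v. -/

import Mathlib

open Matrix BigOperators

/-- The "intervened" matrix: zero out off-diagonal entries in row `i` and column `i`. -/
def intervene {m : ℕ} (S : Matrix (Fin m) (Fin m) ℝ) (i : Fin m) : Matrix (Fin m) (Fin m) ℝ :=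
  Matrix.of fun j k => if j ≠ k ∧ (j = i ∨ k = i) then 0 else S j k

theorem stmt4 {m : ℕ} (S : Matrix (Fin m) (Fin m) ℝ) (hS : S.PosDef) (i : Fin m)
    (l L : ℝ) (hl : 0 < l) (hlL : l ≤ L)
    (hbound : ∀ v : Fin m → ℝ, l * (v ⬝ᵥ v) ≤ v ⬝ᵥ S.mulVec v ∧ v ⬝ᵥ S.mulVec v ≤ L * (v ⬝ᵥ v)) :
    ∀ v : Fin m → ℝ,
      |v ⬝ᵥ (intervene S i).mulVec v - v ⬝ᵥ S.mulVec v|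
        ≤ (2 * L / l - 1) * (v ⬝ᵥ S.mulVec v) := by
  intro v
  set u : Fin m → ℝ := fun j => if j = i then v j else 0 with hu
  set w : Fin m → ℝ := fun j => if j = i then 0 else v j with hw
  have key : v ⬝ᵥ (intervene S i).mulVec v = u ⬝ᵥ S.mulVec u + w ⬝ᵥ S.mulVec w := by
    simp only [dotProduct, mulVec, intervene, Matrix.of_apply, Finset.mul_sum, hu, hw]
    rw [← Finset.sum_add_distrib]
    refine Finset.sum_congr rfl fun j _ => ?_
    rw [← Finset.sum_add_distrib]
    refine Finset.sum_congr rfl fun k _ => ?_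
    by_cases hj : j = i <;> by_cases hk : k = i
    · subst hj; subst hk; simp
    · have hik : i ≠ k := fun h => hk h.symm
      subst hj; simp [hk, hik]
    · have hki : i ≠ j := fun h => hj h.symm
      subst hk; simp [hj, hki]
    · simp [hj, hk]
  have huw : u ⬝ᵥ u + w ⬝ᵥ w = v ⬝ᵥ v := by
    simp only [dotProduct, hu, hw]
    rw [← Finset.sum_add_distrib]
    refine Finset.sum_congr rfl fun j _ => ?_
    by_cases hj : j = i <;> simp [hj]
  have hpsd := hS.posSemidef
  have h0u : (0:ℝ) ≤ u ⬝ᵥ S.mulVec u := by simpa using hpsd.dotProduct_mulVec_nonneg u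
  have h0w : (0:ℝ) ≤ w ⬝ᵥ S.mulVec w := by simpa using hpsd.dotProduct_mulVec_nonneg w
  have h0v : (0:ℝ) ≤ v ⬝ᵥ S.mulVec v := by simpa using hpsd.dotProduct_mulVec_nonneg v
  have hupper : u ⬝ᵥ S.mulVec u + w ⬝ᵥ S.mulVec w ≤ L * (v ⬝ᵥ v) := by
    have h1 := (hbound u).2
    have h2 := (hbound w).2
    have := huw
    nlinarith
  have hlv := (hbound v).1
  have heq : (2 * L / l - 1) * (v ⬝ᵥ S.mulVec v)
      = ((2 * L - l) * (v ⬝ᵥ S.mulVec v)) / l := by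
    field_simp
  rw [heq, le_div_iff₀ hl,
    show |v ⬝ᵥ (intervene S i).mulVec v - v ⬝ᵥ S.mulVec v| * l
        = |(v ⬝ᵥ (intervene S i).mulVec v - v ⬝ᵥ S.mulVec v) * l| by
      rw [abs_mul, abs_of_pos hl], abs_le]
  constructor <;> nlinarith [mul_nonneg (sub_nonneg.2 hlL) h0v, mul_le_mul_of_nonneg_left hlv (le_of_lt (lt_of_lt_of_le hl hlL)), mul_le_mul_of_nonneg_right hupper (le_of_lt hl)]
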